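/- Let λ and μ be Lagrangian subspaces of H that almost coincide, i.e., the quotient λ / (λ ∩ μ) is finite-dimensional. Then there exists a bijective isometric linear map U : H → H with U ∘ J = J ∘ U such that U − Id has finite rank and U(λ) = μ. -/

import Mathlib

open scoped RealInnerProductSpace

/-- The annihilator of a set `μ` with respect to the symplectic form `ω(x, y) = ⟪J x, y⟫`. -/
def omegaAnn {H : Type*} [NormedAddCommGroup H] [InnerProductSpace ℝ H]
    (J : H →L[ℝ] H) (μ : Set H) : Set H :=
  {x : H | ∀ y ∈ μ, ⟪J x, y⟫ = 0}

set_option maxHeartbeats 1000000 in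
/-- If two Lagrangian subspaces almost coincide (`λ / (λ ∩ μ)` is finite-dimensional), they
are related by a unitary operator of the form `Id + finite rank`. -/
theorem almost_coincident_lagrangians_unitarily_related
    {H : Type*} [NormedAddCommGroup H] [InnerProductSpace ℝ H] [CompleteSpace H]
    (J : H →L[ℝ] H) (hJ2 : ∀ x : H, J (J x) = -x)
    (hJorth : ∀ x y : H, ⟪J x, J y⟫ = ⟪x, y⟫)
    (lam μ : Submodule ℝ H)
    (hlam : omegaAnn J (lam : Set H) = (lam : Set H))
    (hμ : omegaAnn J (μ : Set H) = (μ : Set H))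
    (hfin : FiniteDimensional ℝ (↥lam ⧸ (μ.comap lam.subtype))) :
    ∃ U : H →L[ℝ] H, Function.Bijective ⇑U ∧
      (∀ x y : H, ⟪U x, U y⟫ = ⟪x, y⟫) ∧
      (∀ x : H, U (J x) = J (U x)) ∧
      FiniteDimensional ℝ ↥(LinearMap.range ((U - (1 : H →L[ℝ] H) : H →L[ℝ] H) : H →ₗ[ℝ] H)) ∧
      lam.map (U : H →ₗ[ℝ] H) = μ := by
  classical
  haveI := hfin
  set Jl : H →ₗ[ℝ] H := (J : H →ₗ[ℝ] H) with hJldef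
  have hJlapp : ∀ x : H, Jl x = J x := fun x => rfl
  have hJinj : Function.Injective J := by
    intro a b h
    have h2 := congrArg J h
    rw [hJ2, hJ2, neg_inj] at h2; exact h2
  have hJsurj : Function.Surjective J := fun y => ⟨-J y, by rw [map_neg, hJ2, neg_neg]⟩
  have hskew : ∀ x y : H, ⟪x, J y⟫ = -⟪J x, y⟫ := fun x y => by
    rw [← hJorth x (J y), hJ2, inner_neg_right]
  -- the annihilator is `comap J Lᗮ`
  have hcomap : ∀ L : Submodule ℝ H,
      omegaAnn J (L : Set H) = ((Lᗮ).comap Jl : Set H) := by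
    intro L; ext x
    simp only [omegaAnn, Set.mem_setOf_eq, SetLike.mem_coe, Submodule.mem_comap,
      Submodule.mem_orthogonal, hJlapp]
    constructor
    · intro h u hu; rw [real_inner_comm]; exact h u hu
    · intro h y hy; rw [real_inner_comm]; exact h y hy
  have hlam' : (lamᗮ).comap Jl = lam := SetLike.coe_injective ((hcomap lam).symm.trans hlam)
  have hμ' : (μᗮ).comap Jl = μ := SetLike.coe_injective ((hcomap μ).symm.trans hμ)
  have hJr : LinearMap.range Jl = ⊤ := LinearMap.range_eq_top.mpr hJsurj
  have hmap : ∀ L : Submodule ℝ H, (Lᗮ).comap Jl = L → L.map Jl = Lᗮ := by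
    intro L h
    conv_lhs => rw [← h]
    rw [Submodule.map_comap_eq, hJr, top_inf_eq]
  have h1 : lam.map Jl = lamᗮ := hmap lam hlam'
  have h2 : μ.map Jl = μᗮ := hmap μ hμ'
  -- closedness
  have hclosed : ∀ L : Submodule ℝ H, (Lᗮ).comap Jl = L → IsClosed (L : Set H) := by
    intro L h
    rw [← h]
    exact (Submodule.isClosed_orthogonal _).preimage J.continuous
  have hlamc := hclosed lam hlam'
  have hμc := hclosed μ hμ'
  set ν : Submodule ℝ H := lam ⊓ μ with hνdef
  have hνc : IsClosed (ν : Set H) := by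
    rw [hνdef, Submodule.coe_inf]; exact hlamc.inter hμc
  haveI : CompleteSpace ν := hνc.completeSpace_coe
  set V : Submodule ℝ H := ν ⊔ ν.map Jl with hVdef
  -- J maps orthogonal complements into orthogonal complements of images
  have hmapOrth : ∀ A : Submodule ℝ H, (Aᗮ).map Jl ≤ (A.map Jl)ᗮ := by
    intro A x hx
    obtain ⟨a, ha, rfl⟩ := hx
    rw [Submodule.mem_orthogonal]
    rintro u ⟨b, hb, rfl⟩
    rw [hJlapp, hJlapp, hJorth]
    exact (Submodule.mem_orthogonal _ _).1 ha b hb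
  have hJJ : ∀ A : Submodule ℝ H, (A.map Jl).map Jl = A := by
    intro A; ext x
    simp only [Submodule.mem_map]
    constructor
    · rintro ⟨a, ⟨b, hb, rfl⟩, rfl⟩
      have : Jl (Jl b) = -b := hJ2 b
      rw [this]; exact A.neg_mem hb
    · intro hx
      exact ⟨Jl (-x), ⟨-x, A.neg_mem hx, rfl⟩, by
        have : Jl (Jl (-x)) = -(-x) := hJ2 (-x)
        rw [this, neg_neg]⟩
  -- the key geometric lemma, applied to both `lam` and `μ`
  have key : ∀ L : Submodule ℝ H, L.map Jl = Lᗮ → ν ≤ L →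
      (νᗮ ⊓ L) ⊔ (νᗮ ⊓ L).map Jl = Vᗮ := by
    intro L hL hνL
    have hLc : IsClosed (L : Set H) := by
      have hLeq : L = (Lᗮ).map Jl := by
        conv_lhs => rw [← hJJ L, hL]
      have hset : ((Lᗮ).map Jl : Set H) = (fun x => -J x) ⁻¹' (Lᗮ : Set H) := by
        ext x
        simp only [Set.mem_preimage, SetLike.mem_coe, Submodule.mem_map]
        constructor
        · rintro ⟨a, ha, rfl⟩
          have : -J (Jl a) = a := by rw [hJlapp, hJ2, neg_neg]
          rw [this]; exact ha
        · intro hx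
          exact ⟨-J x, hx, by rw [hJlapp, map_neg, hJ2, neg_neg]⟩
      rw [hLeq, hset]
      exact (Submodule.isClosed_orthogonal _).preimage J.continuous.neg
    haveI : CompleteSpace L := hLc.completeSpace_coe
    have hd : ν ⊔ (νᗮ ⊓ L) = L := Submodule.sup_orthogonal_inf_of_hasOrthogonalProjection hνL
    have htopL : (ν ⊔ ν.map Jl) ⊔ ((νᗮ ⊓ L) ⊔ ((νᗮ ⊓ L)).map Jl) = ⊤ := by
      have ht : L ⊔ Lᗮ = ⊤ := Submodule.sup_orthogonal_of_hasOrthogonalProjection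
      rw [← hL, ← hd, Submodule.map_sup] at ht
      rw [← ht]
      exact (sup_sup_sup_comm ν (νᗮ ⊓ L) (ν.map Jl) ((νᗮ ⊓ L).map Jl)).symm
    have hle : (νᗮ ⊓ L) ⊔ (νᗮ ⊓ L).map Jl ≤ (ν ⊔ ν.map Jl)ᗮ := by
      rw [← Submodule.inf_orthogonal]
      refine sup_le (le_inf inf_le_left ?_) (le_inf ?_ ?_)
      · -- νᗮ ⊓ L ≤ (ν.map Jl)ᗮ
        calc νᗮ ⊓ L ≤ L := inf_le_right
          _ ≤ Lᗮᗮ := Submodule.le_orthogonal_orthogonal L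
          _ ≤ (ν.map Jl)ᗮ := Submodule.orthogonal_le (by
              rw [← hL]; exact Submodule.map_mono hνL)
      · -- (νᗮ ⊓ L).map Jl ≤ νᗮ
        calc (νᗮ ⊓ L).map Jl ≤ L.map Jl := Submodule.map_mono inf_le_right
          _ = Lᗮ := hL
          _ ≤ νᗮ := Submodule.orthogonal_le hνL
      · -- (νᗮ ⊓ L).map Jl ≤ (ν.map Jl)ᗮ
        calc (νᗮ ⊓ L).map Jl ≤ (νᗮ).map Jl := Submodule.map_mono inf_le_left
          _ ≤ (ν.map Jl)ᗮ := hmapOrth ν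
    refine le_antisymm (hVdef ▸ hle) ?_
    intro x hx
    have hxtop : x ∈ (ν ⊔ ν.map Jl) ⊔ ((νᗮ ⊓ L) ⊔ ((νᗮ ⊓ L)).map Jl) := htopL ▸ Submodule.mem_top
    obtain ⟨a, ha, b, hb, rfl⟩ := Submodule.mem_sup.1 hxtop
    have hVa : a ∈ V := hVdef ▸ ha
    have hab : ⟪a, b⟫ = 0 := by
      have hbV : b ∈ Vᗮ := hVdef ▸ (hle hb)
      exact (Submodule.mem_orthogonal _ _).1 hbV a hVa
    have hax : ⟪a, a + b⟫ = 0 := (Submodule.mem_orthogonal _ _).1 hx a hVa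
    have haa : ⟪a, a⟫ = 0 := by
      have := hax
      rw [inner_add_right, hab, add_zero] at this
      exact this
    have ha0 : a = 0 := by
      rwa [real_inner_self_eq_norm_sq, pow_eq_zero_iff (by norm_num), norm_eq_zero] at haa
    rw [ha0, zero_add]
    exact hb
  -- the finite–dimensional pieces
  set F : Submodule ℝ H := νᗮ ⊓ lam with hFdef
  set G : Submodule ℝ H := νᗮ ⊓ μ with hGdef
  have hWeq : F ⊔ F.map Jl = Vᗮ := key lam h1 inf_le_left
  have hWG : G ⊔ G.map Jl = Vᗮ := key μ h2 inf_le_right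
  set W : Submodule ℝ H := F ⊔ F.map Jl with hWdef
  have hGW : G ≤ W := by
    have h0 : G ≤ G ⊔ G.map Jl := le_sup_left
    rw [hWG, ← hWeq] at h0; exact h0
  have hJGW : G.map Jl ≤ W := by
    have h0 : G.map Jl ≤ G ⊔ G.map Jl := le_sup_right
    rw [hWG, ← hWeq] at h0; exact h0
  have hFW : F ≤ W := le_sup_left
  have hJFW : F.map Jl ≤ W := le_sup_right
  have hFlam : F ≤ lam := inf_le_right
  have hGμ : G ≤ μ := inf_le_right
  -- F is finite dimensional
  have hFfd : FiniteDimensional ℝ F := by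
    let q : F →ₗ[ℝ] (↥lam ⧸ (μ.comap lam.subtype)) :=
      (μ.comap lam.subtype).mkQ ∘ₗ Submodule.inclusion hFlam
    have hinj : Function.Injective q := by
      rw [← LinearMap.ker_eq_bot, eq_bot_iff]
      rintro ⟨x, hxF⟩ hx
      simp only [LinearMap.mem_ker, q, LinearMap.comp_apply, Submodule.mkQ_apply,
        Submodule.Quotient.mk_eq_zero, Submodule.mem_comap] at hx
      have hxμ : x ∈ μ := hx
      have hxν : x ∈ ν := Submodule.mem_inf.mpr ⟨hxF.2, hxμ⟩
      have hx0 : x = 0 :=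
        inner_self_eq_zero.mp ((Submodule.mem_orthogonal _ _).1 hxF.1 x hxν)
      rw [Submodule.mem_bot]
      exact Subtype.ext hx0
    exact FiniteDimensional.of_injective q hinj
  haveI := hFfd
  haveI hWfd : FiniteDimensional ℝ W := by
    rw [hWdef]; infer_instance
  haveI hGfd : FiniteDimensional ℝ G := Submodule.finiteDimensional_of_le hGW
  -- disjointness of F and J F, G and J G
  have hdisj : ∀ L : Submodule ℝ H, L.map Jl = Lᗮ →
      (νᗮ ⊓ L) ⊓ (νᗮ ⊓ L).map Jl = ⊥ := by
    intro L hL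
    rw [eq_bot_iff]
    intro x hx
    have hxL : x ∈ L := hx.1.2
    have hxorth : x ∈ Lᗮ := by
      rw [← hL]; exact Submodule.map_mono inf_le_right hx.2
    rw [Submodule.mem_bot]
    exact inner_self_eq_zero.mp ((Submodule.mem_orthogonal _ _).1 hxorth x hxL)
  have hJlinj : Function.Injective Jl := hJinj
  have hfrJ : ∀ A : Submodule ℝ H,
      Module.finrank ℝ (A.map Jl) = Module.finrank ℝ A := fun A =>
    (Submodule.equivMapOfInjective Jl hJlinj A).finrank_eq.symm
  have hrank : Module.finrank ℝ G = Module.finrank ℝ F := by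
    have hF2 := Submodule.finrank_sup_add_finrank_inf_eq F (F.map Jl)
    have hG2 := Submodule.finrank_sup_add_finrank_inf_eq G (G.map Jl)
    rw [hFdef] at hF2 ⊢
    rw [hGdef] at hG2 ⊢
    rw [hdisj lam h1, finrank_bot, add_zero, hfrJ] at hF2
    rw [hdisj μ h2, finrank_bot, add_zero, hfrJ] at hG2
    have hWW : (νᗮ ⊓ lam) ⊔ (νᗮ ⊓ lam).map Jl = (νᗮ ⊓ μ) ⊔ (νᗮ ⊓ μ).map Jl := by
      rw [← hFdef, ← hGdef, ← hWdef, hWeq, ← hWG]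
    rw [hWW] at hF2
    omega
  -- orthonormal bases
  set n := Module.finrank ℝ F with hn
  let bF : OrthonormalBasis (Fin n) ℝ F := stdOrthonormalBasis ℝ F
  let bG : OrthonormalBasis (Fin n) ℝ G := (stdOrthonormalBasis ℝ G).reindex (finCongr hrank)
  set e : Fin n → H := fun i => (bF i : H) with hedef
  set f : Fin n → H := fun i => (bG i : H) with hfdef
  have heF : ∀ i, e i ∈ F := fun i => (bF i).2
  have hfG : ∀ i, f i ∈ G := fun i => (bG i).2
  have hspanF : Submodule.span ℝ (Set.range e) = F := by
    have h0 : Set.range e = F.subtype '' Set.range bF := by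
      rw [← Set.range_comp]; rfl
    have hsp : Submodule.span ℝ (Set.range (bF : Fin n → F)) = ⊤ := by
      rw [← OrthonormalBasis.coe_toBasis bF]; exact bF.toBasis.span_eq
    rw [h0, ← Submodule.map_span, hsp, Submodule.map_subtype_top]
  have hspanG : Submodule.span ℝ (Set.range f) = G := by
    have h0 : Set.range f = G.subtype '' Set.range bG := by
      rw [← Set.range_comp]; rfl
    have hsp : Submodule.span ℝ (Set.range (bG : Fin n → G)) = ⊤ := by
      rw [← OrthonormalBasis.coe_toBasis bG]; exact bG.toBasis.span_eq
    rw [h0, ← Submodule.map_span, hsp, Submodule.map_subtype_top]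
  have horthF : ∀ i j, ⟪e i, e j⟫ = if i = j then 1 else 0 := by
    intro i j
    have h0 := orthonormal_iff_ite.mp bF.orthonormal i j
    rwa [Submodule.coe_inner] at h0
  have horthG : ∀ i j, ⟪f i, f j⟫ = if i = j then 1 else 0 := by
    intro i j
    have h0 := orthonormal_iff_ite.mp bG.orthonormal i j
    rwa [Submodule.coe_inner] at h0
  -- cross-orthogonality with J-images
  have hcross : ∀ (L : Submodule ℝ H), L.map Jl = Lᗮ →
      ∀ x y, x ∈ L → y ∈ L → ⟪x, J y⟫ = 0 := by
    intro L hL x y hx hy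
    have : J y ∈ Lᗮ := by rw [← hL]; exact ⟨y, hy, rfl⟩
    exact (Submodule.mem_orthogonal _ _).1 this x hx
  -- the combined families
  set E : Fin n ⊕ Fin n → H := Sum.elim e (fun i => J (e i)) with hEdef
  set Fv : Fin n ⊕ Fin n → H := Sum.elim f (fun i => J (f i)) with hFvdef
  have hEW : ∀ k, E k ∈ W := by
    intro k
    cases k with
    | inl i => exact hFW (heF i)
    | inr i => exact hJFW ⟨e i, heF i, rfl⟩
  have hFvW : ∀ k, Fv k ∈ W := by
    intro k
    cases k with
    | inl i => exact hGW (hfG i)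
    | inr i => exact hJGW ⟨f i, hfG i, rfl⟩
  have hEorth : Orthonormal ℝ E := by
    rw [orthonormal_iff_ite]
    rintro (i | i) (j | j)
    · simpa [hEdef] using horthF i j
    · simpa [hEdef] using hcross lam h1 (e i) (e j) (hFlam (heF i)) (hFlam (heF j))
    · have h0 := hcross lam h1 (e j) (e i) (hFlam (heF j)) (hFlam (heF i))
      rw [real_inner_comm] at h0
      simpa [hEdef] using h0
    · have h0 : ⟪J (e i), J (e j)⟫ = ⟪e i, e j⟫ := hJorth _ _
      simpa [hEdef, h0] using horthF i j
  have hFvorth : Orthonormal ℝ Fv := by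
    rw [orthonormal_iff_ite]
    rintro (i | i) (j | j)
    · simpa [hFvdef] using horthG i j
    · simpa [hFvdef] using hcross μ h2 (f i) (f j) (hGμ (hfG i)) (hGμ (hfG j))
    · have h0 := hcross μ h2 (f j) (f i) (hGμ (hfG j)) (hGμ (hfG i))
      rw [real_inner_comm] at h0
      simpa [hFvdef] using h0
    · have h0 : ⟪J (f i), J (f j)⟫ = ⟪f i, f j⟫ := hJorth _ _
      simpa [hFvdef, h0] using horthG i j
  -- the unitary operator
  set T : H →L[ℝ] H := ∑ k : Fin n ⊕ Fin n, (innerSL ℝ (E k)).smulRight (Fv k - E k) with hTdef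
  set U : H →L[ℝ] H := 1 + T with hUdef
  have hUapp : ∀ x, U x = x + ∑ k : Fin n ⊕ Fin n, ⟪E k, x⟫ • (Fv k - E k) := by
    intro x
    rw [hUdef, ContinuousLinearMap.add_apply, ContinuousLinearMap.one_apply, hTdef,
      ContinuousLinearMap.sum_apply]
    simp only [ContinuousLinearMap.smulRight_apply, innerSL_apply_apply]
  have hUsplit : ∀ x, U x = (x - ∑ k : Fin n ⊕ Fin n, ⟪E k, x⟫ • E k)
      + ∑ k : Fin n ⊕ Fin n, ⟪E k, x⟫ • Fv k := by
    intro x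
    rw [hUapp]
    simp only [smul_sub]
    rw [Finset.sum_sub_distrib]
    try abel
  have hQE : ∀ x k, ⟪E k, x - ∑ l : Fin n ⊕ Fin n, ⟪E l, x⟫ • E l⟫ = 0 := by
    intro x k
    rw [inner_sub_right, hEorth.inner_right_fintype (fun l => ⟪E l, x⟫) k, sub_self]
  have hQW : ∀ x, ∀ w ∈ W, ⟪w, x - ∑ l : Fin n ⊕ Fin n, ⟪E l, x⟫ • E l⟫ = 0 := by
    intro x w hw
    have hWspan : W = Submodule.span ℝ (Set.range E) := by
      rw [hEdef, Set.Sum.elim_range, Submodule.span_union, hWdef]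
      congr 1
      · exact hspanF.symm
      · rw [show (Set.range fun i => J (e i)) = ⇑Jl '' Set.range e from by
            rw [← Set.range_comp]; rfl,
          Submodule.span_image, hspanF]
    rw [hWspan] at hw
    induction hw using Submodule.span_induction with
    | mem w hwmem =>
      obtain ⟨k, rfl⟩ := hwmem
      exact hQE x k
    | zero => simp
    | add a b _ _ ha hb => rw [inner_add_left, ha, hb, add_zero]
    | smul r a _ ha => rw [real_inner_smul_left, ha, mul_zero]
  have hQW' : ∀ x, ∀ w ∈ W, ⟪x - ∑ l : Fin n ⊕ Fin n, ⟪E l, x⟫ • E l, w⟫ = 0 := by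
    intro x w hw
    have h0 := hQW x w hw
    rw [← h0]
    exact real_inner_comm _ _
  have hQE' : ∀ x k, ⟪x - ∑ l : Fin n ⊕ Fin n, ⟪E l, x⟫ • E l, E k⟫ = 0 :=
    fun x k => hQW' x (E k) (hEW k)
  have hinner : ∀ x y, ⟪U x, U y⟫ = ⟪x, y⟫ := by
    intro x y
    rw [hUsplit x, hUsplit y]
    have hqxRy : ⟪x - ∑ l : Fin n ⊕ Fin n, ⟪E l, x⟫ • E l,
        ∑ k : Fin n ⊕ Fin n, ⟪E k, y⟫ • Fv k⟫ = 0 := by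
      rw [inner_sum]
      exact Finset.sum_eq_zero fun k _ => by
        rw [real_inner_smul_right, hQW' x (Fv k) (hFvW k), mul_zero]
    have hRxqy : ⟪∑ k : Fin n ⊕ Fin n, ⟪E k, x⟫ • Fv k,
        y - ∑ l : Fin n ⊕ Fin n, ⟪E l, y⟫ • E l⟫ = 0 := by
      rw [sum_inner]
      refine Finset.sum_eq_zero fun k _ => ?_
      rw [real_inner_smul_left, hQW y (Fv k) (hFvW k), mul_zero]
    have hRxRy : ⟪∑ k : Fin n ⊕ Fin n, ⟪E k, x⟫ • Fv k,
        ∑ k : Fin n ⊕ Fin n, ⟪E k, y⟫ • Fv k⟫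
        = ∑ k : Fin n ⊕ Fin n, ⟪E k, x⟫ * ⟪E k, y⟫ := by
      rw [hFvorth.inner_sum]
      simp
    have hPy : ⟪x - ∑ l : Fin n ⊕ Fin n, ⟪E l, x⟫ • E l,
        ∑ k : Fin n ⊕ Fin n, ⟪E k, y⟫ • E k⟫ = 0 := by
      rw [inner_sum]
      exact Finset.sum_eq_zero fun k _ => by
        rw [real_inner_smul_right, hQE' x k, mul_zero]
    have hqq : ⟪x - ∑ l : Fin n ⊕ Fin n, ⟪E l, x⟫ • E l,
        y - ∑ l : Fin n ⊕ Fin n, ⟪E l, y⟫ • E l⟫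
        = ⟪x, y⟫ - ∑ k : Fin n ⊕ Fin n, ⟪E k, x⟫ * ⟪E k, y⟫ := by
      rw [inner_sub_right, hPy, sub_zero, inner_sub_left]
      congr 1
      rw [sum_inner]
      exact Finset.sum_congr rfl fun k _ => by rw [real_inner_smul_left]
    rw [inner_add_left, inner_add_right, inner_add_right, hqxRy, hRxqy, hRxRy, hqq]
    ring
  -- commutation with J
  have hcomm : ∀ x, U (J x) = J (U x) := by
    intro x
    rw [hUapp, hUapp, map_add]
    congr 1
    rw [map_sum]
    rw [hEdef, hFvdef]
    rw [Fintype.sum_sum_type, Fintype.sum_sum_type]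
    simp only [Sum.elim_inl, Sum.elim_inr]
    have hs1 : ∀ i, ⟪e i, J x⟫ = -⟪J (e i), x⟫ := fun i => hskew (e i) x
    have hs2 : ∀ i, ⟪J (e i), J x⟫ = ⟪e i, x⟫ := fun i => hJorth (e i) x
    simp only [hs1, hs2, map_smul, map_sub, hJ2, neg_smul]
    have hterm : ∀ i : Fin n, -(⟪J (e i), x⟫ • (f i - e i)) = ⟪J (e i), x⟫ • (-f i - -e i) := by
      intro i; module
    simp only [hterm]
    exact add_comm _ _
    -- U fixes vectors orthogonal to all E k
  have hUfix : ∀ x, (∀ k, ⟪E k, x⟫ = 0) → U x = x := by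
    intro x hx
    rw [hUapp, Finset.sum_eq_zero (fun k _ => by rw [hx k, zero_smul]), add_zero]
  have hUWperp : ∀ x ∈ Wᗮ, U x = x := by
    intro x hx
    exact hUfix x fun k => (Submodule.mem_orthogonal _ _).1 hx (E k) (hEW k)
  have hUν : ∀ x ∈ ν, U x = x := by
    intro x hx
    refine hUfix x fun k => ?_
    have hWν : W ≤ νᗮ := by
      rw [hWeq]
      exact Submodule.orthogonal_le le_sup_left
    have hEν : E k ∈ νᗮ := hWν (hEW k)
    rw [real_inner_comm]
    exact (Submodule.mem_orthogonal _ _).1 hEν x hx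
  have hUW : ∀ x ∈ W, U x ∈ W := by
    intro x hx
    rw [hUapp]
    exact W.add_mem hx (Submodule.sum_mem _ fun k _ =>
      W.smul_mem _ (W.sub_mem (hFvW k) (hEW k)))
  have hUe : ∀ j, U (e j) = f j := by
    intro j
    have h0 : ∀ k : Fin n ⊕ Fin n, ⟪E k, e j⟫ = if k = Sum.inl j then 1 else 0 := by
      intro k
      exact orthonormal_iff_ite.mp hEorth k (Sum.inl j)
    rw [hUapp, Finset.sum_congr rfl (fun k _ => by rw [h0 k])]
    simp only [ite_smul, one_smul, zero_smul, Finset.sum_ite_eq', Finset.mem_univ, if_true]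
    show e j + (f j - e j) = f j
    abel
  -- injectivity
  have hinj : Function.Injective ⇑U := by
    intro a b hab
    have h0 : ⟪a - b, a - b⟫ = 0 := by
      rw [← hinner (a - b) (a - b), map_sub, hab, sub_self, inner_zero_left]
    exact sub_eq_zero.mp (inner_self_eq_zero.mp h0)
  -- surjectivity
  haveI : CompleteSpace W := FiniteDimensional.complete ℝ W
  have hsurj : Function.Surjective ⇑U := by
    intro y
    have hpW : ((W.orthogonalProjectionOnto y : W) : H) ∈ W := (W.orthogonalProjectionOnto y).2
    have hyp : y - (W.orthogonalProjectionOnto y : W) ∈ Wᗮ :=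
      by exact Submodule.sub_starProjection_mem_orthogonal (K := W) y
    let Ures : W →ₗ[ℝ] W := ((U : H →ₗ[ℝ] H)).restrict hUW
    have hUresinj : Function.Injective Ures := by
      intro a b hab
      have h0 : U (a : H) = U (b : H) := congrArg Subtype.val hab
      exact Subtype.ext (hinj h0)
    have hUressurj := LinearMap.surjective_of_injective hUresinj
    obtain ⟨w, hw⟩ := hUressurj ⟨((W.orthogonalProjectionOnto y : W) : H), hpW⟩
    refine ⟨(w : H) + (y - (W.orthogonalProjectionOnto y : W)), ?_⟩
    rw [map_add, hUWperp _ hyp]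
    have hUw : U (w : H) = ((W.orthogonalProjectionOnto y : W) : H) := congrArg Subtype.val hw
    rw [hUw]
    abel
  -- finite rank
  have hrange : LinearMap.range ((U - (1 : H →L[ℝ] H) : H →L[ℝ] H) : H →ₗ[ℝ] H) ≤ W := by
    rintro x ⟨z, rfl⟩
    have h0 : ((U - (1 : H →L[ℝ] H) : H →L[ℝ] H) : H →ₗ[ℝ] H) z = U z - z := by
      simp [ContinuousLinearMap.sub_apply]
    have h1 : U z - z = ∑ k : Fin n ⊕ Fin n, ⟪E k, z⟫ • (Fv k - E k) := by
      rw [hUapp]; abel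
    rw [h0, h1]
    exact Submodule.sum_mem _ fun k _ =>
      W.smul_mem _ (W.sub_mem (hFvW k) (hEW k))
  have hrfd : FiniteDimensional ℝ ↥(LinearMap.range ((U - (1 : H →L[ℝ] H) : H →L[ℝ] H) : H →ₗ[ℝ] H)) :=
    Submodule.finiteDimensional_of_le hrange
  -- the mapping property
  have hmapF : F.map (U : H →ₗ[ℝ] H) = G := by
    rw [← hspanF, Submodule.map_span, ← hspanG]
    congr 1
    rw [← Set.range_comp]
    exact congrArg Set.range (funext fun j => hUe j)
  have hmapν : ν.map (U : H →ₗ[ℝ] H) = ν := by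
    ext y
    simp only [Submodule.mem_map]
    constructor
    · rintro ⟨x, hx, rfl⟩
      have h0 : (U : H →ₗ[ℝ] H) x = U x := rfl
      rw [h0, hUν x hx]
      exact hx
    · intro hy
      exact ⟨y, hy, hUν y hy⟩
  have hfinal : lam.map (U : H →ₗ[ℝ] H) = μ := by
    have hlamd : ν ⊔ F = lam :=
      Submodule.sup_orthogonal_inf_of_hasOrthogonalProjection (inf_le_left : ν ≤ lam)
    have hμd : ν ⊔ G = μ :=
      Submodule.sup_orthogonal_inf_of_hasOrthogonalProjection (inf_le_right : ν ≤ μ)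
    rw [← hlamd, Submodule.map_sup, hmapν, hmapF, hμd]
  exact ⟨U, ⟨hinj, hsurj⟩, hinner, hcomm, hrfd, hfinal⟩
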